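/- Let β > 0, τ ≥ 0, let F⁰ : ℝ^d → ℝ be β-smooth, let f¹ : ℝ^d → ℝ be convex, set F := F⁰ + f¹, and suppose F is bounded below with F* := inf_{w'∈ℝ^d} F(w'). Let η := 1/(2β), let R ≥ 1, let w_0 ∈ ℝ^d, and let h_0, …, h_{R−1} ∈ ℝ^d satisfy ‖h_r − ∇F⁰(w_r)‖ ≤ τ for all 0 ≤ r < R, where w_{r+1} := prox_{ηf¹}(w_r − η h_r). Then (1/R) Σ_{r=0}^{R−1} ‖(w_r − w_{r+1})/η‖² ≤ 8β(F(w_0) − F*)/R + 2τ², and consequently, with G_η(w) := (1/η)(w − prox_{ηf¹}(w − η ∇F⁰(w))) denoting the proximal gradient mapping, (1/R) Σ_{r=0}^{R−1} ‖G_η(w_r)‖² ≤ 16β(F(w_0) − F*)/R + 6τ². -/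

import Mathlib

open scoped RealInnerProductSpace

lemma descent_lem {E : Type*} [NormedAddCommGroup E] [InnerProductSpace ℝ E] [CompleteSpace E]
    {F0 : E → ℝ} {β : ℝ} (hβ : 0 < β) (hdiff : Differentiable ℝ F0)
    (hsmooth : ∀ x y, ‖gradient F0 x - gradient F0 y‖ ≤ β * ‖x - y‖) (x y : E) :
    F0 y ≤ F0 x + ⟪gradient F0 x, y - x⟫ + β / 2 * ‖y - x‖ ^ 2 := by
  set v := y - x with hv
  set K := (⟪gradient F0 x, v⟫ : ℝ) with hK
  set g : ℝ → ℝ := fun t => F0 (x + t • v) - t * K - β / 2 * t ^ 2 * ‖v‖ ^ 2 with hg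
  have hc : ∀ t : ℝ, HasDerivAt (fun t : ℝ => x + t • v) v t := by
    intro t
    simpa using ((hasDerivAt_id t).smul_const v).const_add x
  have hF : ∀ t : ℝ, HasDerivAt (fun t : ℝ => F0 (x + t • v))
      (⟪gradient F0 (x + t • v), v⟫) t := by
    intro t
    have hG : HasGradientAt F0 (gradient F0 (x + t • v)) (x + t • v) :=
      (hdiff _).hasGradientAt
    have := hG.hasFDerivAt.comp_hasDerivAt t (hc t)
    rw [InnerProductSpace.toDual_apply_apply] at this
    exact this
  have hg' : ∀ t : ℝ, HasDerivAt g
      (⟪gradient F0 (x + t • v), v⟫ - K - β * t * ‖v‖ ^ 2) t := by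
    intro t
    have h2 : HasDerivAt (fun t : ℝ => t * K) K t := by
      simpa using (hasDerivAt_id t).mul_const K
    have h3 : HasDerivAt (fun t : ℝ => β / 2 * t ^ 2 * ‖v‖ ^ 2)
        (β * t * ‖v‖ ^ 2) t := by
      have := ((hasDerivAt_pow 2 t).const_mul (β / 2)).mul_const (‖v‖ ^ 2)
      refine this.congr_deriv ?_
      rw [show (2:ℕ) - 1 = 1 from rfl, pow_one]
      push_cast
      ring
    exact (hF t |>.sub h2).sub h3
  have hanti : AntitoneOn g (Set.Icc (0:ℝ) 1) := by
    apply antitoneOn_of_deriv_nonpos (convex_Icc 0 1)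
    · exact (fun t ht => ((hg' t).differentiableAt).continuousAt.continuousWithinAt)
    · intro t ht
      exact ((hg' t).differentiableAt).differentiableWithinAt
    · intro t ht
      rw [interior_Icc] at ht
      rw [(hg' t).deriv]
      have h1 : (⟪gradient F0 (x + t • v) - gradient F0 x, v⟫ : ℝ)
          ≤ ‖gradient F0 (x + t • v) - gradient F0 x‖ * ‖v‖ := real_inner_le_norm _ _
      have h2 : ‖gradient F0 (x + t • v) - gradient F0 x‖ ≤ β * (t * ‖v‖) := by
        have := hsmooth (x + t • v) x
        simpa [norm_smul, abs_of_pos ht.1] using this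
      have h3 : (⟪gradient F0 (x + t • v) - gradient F0 x, v⟫ : ℝ)
          = ⟪gradient F0 (x + t • v), v⟫ - K := by
        rw [inner_sub_left]
      nlinarith [norm_nonneg v, ht.1.le, mul_le_mul_of_nonneg_right h2 (norm_nonneg v)]
  have h01 := hanti (Set.left_mem_Icc.2 zero_le_one) (Set.right_mem_Icc.2 zero_le_one) zero_le_one
  simp only [hg] at h01
  have e0 : x + (0:ℝ) • v = x := by simp
  have e1 : x + (1:ℝ) • v = y := by simp [hv]
  rw [e0, e1] at h01
  simp only [zero_mul, sub_zero, mul_zero, one_mul, one_pow, mul_one] at h01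
  linarith

lemma prox_vi {E : Type*} [NormedAddCommGroup E] [InnerProductSpace ℝ E]
    {f1 : E → ℝ} (hconv : ConvexOn ℝ Set.univ f1) {η : ℝ} (hη : 0 < η)
    {proxF : E → E}
    (hprox : ∀ z v, η * f1 (proxF z) + (1/2) * ‖proxF z - z‖ ^ 2
        ≤ η * f1 v + (1/2) * ‖v - z‖ ^ 2) (z v : E) :
    η * f1 (proxF z) ≤ η * f1 v + ⟪proxF z - z, v - proxF z⟫ := by
  set p := proxF z with hp
  set C : ℝ := ⟪p - z, v - p⟫ with hC
  set D : ℝ := ‖v - p‖ ^ 2 with hD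
  have hD0 : 0 ≤ D := by positivity
  have step : ∀ t : ℝ, 0 < t → t ≤ 1 →
      η * f1 p ≤ η * f1 v + C + t / 2 * D := by
    intro t ht0 ht1
    set u := p + t • (v - p) with hu
    have hcomb : u = (1 - t) • p + t • v := by
      rw [hu]; module
    have hfu : f1 u ≤ (1 - t) * f1 p + t * f1 v := by
      rw [hcomb]
      exact hconv.2 (Set.mem_univ p) (Set.mem_univ v) (by linarith) ht0.le (by ring)
    have hnorm : ‖u - z‖ ^ 2 = ‖p - z‖ ^ 2 + 2 * t * C + t ^ 2 * D := by
      have : u - z = (p - z) + t • (v - p) := by rw [hu]; abel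
      rw [this, norm_add_sq_real, real_inner_smul_right, norm_smul]
      simp [hC, hD, abs_of_pos ht0]
      ring
    have hpx := hprox z u
    rw [← hp, hnorm] at hpx
    have key : t * (η * f1 p) ≤ t * (η * f1 v + C + t / 2 * D) := by nlinarith
    exact le_of_mul_le_mul_left key ht0
  refine le_of_forall_pos_le_add ?_
  intro ε hε
  have ht0 : (0:ℝ) < min 1 (2 * ε / (D + 1)) := by positivity
  have := step _ ht0 (min_le_left _ _)
  have hle : min 1 (2 * ε / (D + 1)) ≤ 2 * ε / (D + 1) := min_le_right _ _
  have h2 : min 1 (2 * ε / (D + 1)) / 2 * D ≤ ε := by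
    have h3 := (le_div_iff₀ (show (0:ℝ) < D + 1 by linarith)).mp hle
    nlinarith
  linarith [step _ ht0 (min_le_left _ _)]

lemma prox_nonexp {E : Type*} [NormedAddCommGroup E] [InnerProductSpace ℝ E]
    {f1 : E → ℝ} (hconv : ConvexOn ℝ Set.univ f1) {η : ℝ} (hη : 0 < η)
    {proxF : E → E}
    (hprox : ∀ z v, η * f1 (proxF z) + (1/2) * ‖proxF z - z‖ ^ 2
        ≤ η * f1 v + (1/2) * ‖v - z‖ ^ 2) (z1 z2 : E) :
    ‖proxF z1 - proxF z2‖ ≤ ‖z1 - z2‖ := by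
  set p1 := proxF z1 with hp1
  set p2 := proxF z2 with hp2
  have h1 := prox_vi hconv hη hprox z1 p2
  have h2 := prox_vi hconv hη hprox z2 p1
  simp only [← hp1, ← hp2] at h1 h2
  have e : (⟪p1 - z1, p2 - p1⟫ : ℝ) + ⟪p2 - z2, p1 - p2⟫
      = ⟪z1 - z2, p1 - p2⟫ - ‖p1 - p2‖ ^ 2 := by
    rw [← real_inner_self_eq_norm_sq]
    simp only [inner_sub_left, inner_sub_right]
    ring
  have key : ‖p1 - p2‖ ^ 2 ≤ ⟪z1 - z2, p1 - p2⟫ := by linarith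
  have hcs : (⟪z1 - z2, p1 - p2⟫ : ℝ) ≤ ‖z1 - z2‖ * ‖p1 - p2‖ := real_inner_le_norm _ _
  rcases eq_or_lt_of_le (norm_nonneg (p1 - p2)) with h | h
  · rw [← h]; exact norm_nonneg _
  · have : ‖p1 - p2‖ * ‖p1 - p2‖ ≤ ‖z1 - z2‖ * ‖p1 - p2‖ := by nlinarith
    exact le_of_mul_le_mul_right this h

set_option maxHeartbeats 1000000 in
theorem stmt11 {d : ℕ} (β τ : ℝ) (hβ : 0 < β) (hτ : 0 ≤ τ)
    (F0 f1 : EuclideanSpace ℝ (Fin d) → ℝ)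
    (hdiff : Differentiable ℝ F0)
    (hsmooth : ∀ x y, ‖gradient F0 x - gradient F0 y‖ ≤ β * ‖x - y‖)
    (hconv : ConvexOn ℝ Set.univ f1)
    (hbdd : BddBelow (Set.range fun v => F0 v + f1 v))
    (Fstar : ℝ) (hFstar : Fstar = ⨅ v, (F0 v + f1 v))
    (R : ℕ) (hR : 1 ≤ R)
    (w h : ℕ → EuclideanSpace ℝ (Fin d))
    (proxF : EuclideanSpace ℝ (Fin d) → EuclideanSpace ℝ (Fin d))
    (hprox : ∀ z v, (1 / (2 * β)) * f1 (proxF z) + (1 / 2) * ‖proxF z - z‖ ^ 2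
        ≤ (1 / (2 * β)) * f1 v + (1 / 2) * ‖v - z‖ ^ 2)
    (hherr : ∀ r < R, ‖h r - gradient F0 (w r)‖ ≤ τ)
    (hstep : ∀ r < R, w (r + 1) = proxF (w r - (1 / (2 * β)) • h r)) :
    (1 / (R : ℝ)) * ∑ r ∈ Finset.range R, ‖(2 * β) • (w r - w (r + 1))‖ ^ 2
      ≤ 8 * β * (F0 (w 0) + f1 (w 0) - Fstar) / R + 2 * τ ^ 2 ∧
    (1 / (R : ℝ)) * ∑ r ∈ Finset.range R,
        ‖(2 * β) • (w r - proxF (w r - (1 / (2 * β)) • gradient F0 (w r)))‖ ^ 2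
      ≤ 16 * β * (F0 (w 0) + f1 (w 0) - Fstar) / R + 6 * τ ^ 2 := by
  have h2β : (0:ℝ) < 2 * β := by linarith
  have hη : (0:ℝ) < 1 / (2 * β) := by positivity
  have hRpos : (0:ℝ) < (R : ℝ) := by exact_mod_cast Nat.lt_of_lt_of_le Nat.zero_lt_one hR
  -- per-step descent
  have key : ∀ r < R, F0 (w (r+1)) + f1 (w (r+1)) + β * ‖w (r+1) - w r‖ ^ 2
      ≤ F0 (w r) + f1 (w r) + τ ^ 2 / (2 * β) := by
    intro r hr
    set Δ := w (r+1) - w r with hΔ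
    have hd := descent_lem hβ hdiff hsmooth (w r) (w (r+1))
    have hvi := prox_vi hconv hη hprox (w r - (1 / (2 * β)) • h r) (w r)
    rw [← hstep r hr] at hvi
    have e1 : (⟪w (r+1) - (w r - (1 / (2 * β)) • h r), w r - w (r+1)⟫ : ℝ)
        = -‖Δ‖ ^ 2 - (1 / (2 * β)) * ⟪h r, Δ⟫ := by
      have ea : w (r+1) - (w r - (1 / (2 * β)) • h r) = Δ + (1 / (2 * β)) • h r := by
        rw [hΔ]; abel
      have eb : w r - w (r+1) = -Δ := by rw [hΔ]; abel
      rw [ea, eb, inner_neg_right, inner_add_left, real_inner_smul_left,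
        real_inner_self_eq_norm_sq]
      ring
    rw [e1] at hvi
    have hf1 : f1 (w (r+1)) ≤ f1 (w r) - 2 * β * ‖Δ‖ ^ 2 - ⟪h r, Δ⟫ := by
      have hm := mul_le_mul_of_nonneg_left hvi h2β.le
      have hc1 : (2 * β) * ((1 / (2 * β)) * f1 (w (r+1))) = f1 (w (r+1)) := by
        field_simp
      have hc2 : (2 * β) * ((1 / (2 * β)) * f1 (w r)
          + (-‖Δ‖ ^ 2 - (1 / (2 * β)) * ⟪h r, Δ⟫))
          = f1 (w r) - 2 * β * ‖Δ‖ ^ 2 - ⟪h r, Δ⟫ := by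
        field_simp
        ring
      rw [hc1, hc2] at hm
      linarith
    have herr := hherr r hr
    have hinner : (⟪gradient F0 (w r) - h r, Δ⟫ : ℝ)
        ≤ τ ^ 2 / (2 * β) + β / 2 * ‖Δ‖ ^ 2 := by
      have h1 : (⟪gradient F0 (w r) - h r, Δ⟫ : ℝ)
          ≤ ‖gradient F0 (w r) - h r‖ * ‖Δ‖ := real_inner_le_norm _ _
      have h2 : ‖gradient F0 (w r) - h r‖ ≤ τ := by
        rw [norm_sub_rev]; exact herr
      have h3 : ‖gradient F0 (w r) - h r‖ * ‖Δ‖ ≤ τ * ‖Δ‖ :=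
        mul_le_mul_of_nonneg_right h2 (norm_nonneg _)
      have ht : τ ^ 2 / (2 * β) * (2 * β) = τ ^ 2 := div_mul_cancel₀ _ (ne_of_gt h2β)
      nlinarith [sq_nonneg (τ - β * ‖Δ‖)]
    have e2 : (⟪gradient F0 (w r) - h r, Δ⟫ : ℝ)
        = ⟪gradient F0 (w r), Δ⟫ - ⟪h r, Δ⟫ := by rw [inner_sub_left]
    rw [e2] at hinner
    linarith
  -- telescoping
  have tel : ∀ n, n ≤ R →
      F0 (w n) + f1 (w n) + ∑ r ∈ Finset.range n, β * ‖w (r+1) - w r‖ ^ 2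
        ≤ F0 (w 0) + f1 (w 0) + n * (τ ^ 2 / (2 * β)) := by
    intro n
    induction n with
    | zero => simp
    | succ n ih =>
      intro hn
      have h1 := ih (Nat.le_of_succ_le hn)
      have h2 := key n hn
      rw [Finset.sum_range_succ]
      push_cast
      linarith
  have hFstarle : ∀ v, Fstar ≤ F0 v + f1 v := by
    intro v
    rw [hFstar]
    exact ciInf_le hbdd v
  set ΔF := F0 (w 0) + f1 (w 0) - Fstar with hΔF
  clear_value ΔF
  have hΔF0 : 0 ≤ ΔF := by
    have := hFstarle (w 0); rw [hΔF]; linarith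
  have hT : ∑ r ∈ Finset.range R, β * ‖w (r+1) - w r‖ ^ 2
      ≤ ΔF + R * (τ ^ 2 / (2 * β)) := by
    have h1 := tel R le_rfl
    have h2 := hFstarle (w R)
    rw [hΔF]; linarith
  -- first sum
  set S1 := ∑ r ∈ Finset.range R, ‖(2 * β) • (w r - w (r + 1))‖ ^ 2 with hS1
  clear_value S1
  have hS1eq : S1 = (4 * β) * ∑ r ∈ Finset.range R, β * ‖w (r+1) - w r‖ ^ 2 := by
    rw [hS1, Finset.mul_sum]
    refine Finset.sum_congr rfl fun r _ => ?_
    rw [norm_smul, norm_sub_rev, mul_pow, Real.norm_eq_abs, sq_abs]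
    ring
  have hS1le : S1 ≤ 4 * β * ΔF + 2 * R * τ ^ 2 := by
    rw [hS1eq]
    have h1 := mul_le_mul_of_nonneg_left hT (by positivity : (0:ℝ) ≤ 4 * β)
    have h2 : 4 * β * (ΔF + R * (τ ^ 2 / (2 * β))) = 4 * β * ΔF + 2 * R * τ ^ 2 := by
      field_simp
      ring
    rw [← h2]
    exact h1
  have goal1 : (1 / (R : ℝ)) * S1 ≤ 8 * β * ΔF / R + 2 * τ ^ 2 := by
    have h1 := mul_le_mul_of_nonneg_left hS1le (by positivity : (0:ℝ) ≤ 1 / R)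
    have h2 : (1 / (R : ℝ)) * (4 * β * ΔF + 2 * R * τ ^ 2)
        = 4 * β * ΔF / R + 2 * τ ^ 2 := by
      field_simp
    have h3 : 4 * β * ΔF / R ≤ 8 * β * ΔF / R := by
      gcongr
      nlinarith
    linarith
  refine ⟨goal1, ?_⟩
  -- second sum
  have hterm : ∀ r < R,
      ‖(2 * β) • (w r - proxF (w r - (1 / (2 * β)) • gradient F0 (w r)))‖ ^ 2
        ≤ 2 * ‖(2 * β) • (w r - w (r + 1))‖ ^ 2 + 2 * τ ^ 2 := by
    intro r hr
    set q := proxF (w r - (1 / (2 * β)) • gradient F0 (w r)) with hq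
    have htri : ‖w r - q‖ ≤ ‖w r - w (r+1)‖ + ‖w (r+1) - q‖ := by
      have : w r - q = (w r - w (r+1)) + (w (r+1) - q) := by abel
      rw [this]; exact norm_add_le _ _
    have hne : ‖w (r+1) - q‖ ≤ (1 / (2 * β)) * τ := by
      rw [hstep r hr, hq]
      have h1 := prox_nonexp hconv hη hprox (w r - (1 / (2 * β)) • h r)
        (w r - (1 / (2 * β)) • gradient F0 (w r))
      have e3 : (w r - (1 / (2 * β)) • h r) - (w r - (1 / (2 * β)) • gradient F0 (w r))
          = (1 / (2 * β)) • (gradient F0 (w r) - h r) := by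
        rw [smul_sub]; abel
      rw [e3] at h1
      have h2 : ‖(1 / (2 * β)) • (gradient F0 (w r) - h r)‖
          ≤ (1 / (2 * β)) * τ := by
        rw [norm_smul, Real.norm_eq_abs, abs_of_pos hη]
        have := hherr r hr
        rw [norm_sub_rev] at this
        exact mul_le_mul_of_nonneg_left this hη.le
      exact h1.trans h2
    have hsc : ∀ x : EuclideanSpace ℝ (Fin d), ‖(2 * β) • x‖ = (2 * β) * ‖x‖ := by
      intro x; rw [norm_smul, Real.norm_eq_abs, abs_of_pos h2β]
    rw [hsc, hsc]
    have hb : (2 * β) * ‖w r - q‖ ≤ (2 * β) * ‖w r - w (r+1)‖ + τ := by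
      have h4 : (2 * β) * ((1 / (2 * β)) * τ) = τ := by field_simp
      have h5 := mul_le_mul_of_nonneg_left
        (htri.trans (add_le_add_right hne _)) h2β.le
      rw [mul_add, h4] at h5
      linarith
    have hx0 : 0 ≤ (2 * β) * ‖w r - q‖ := by positivity
    have hsq := mul_self_le_mul_self hx0 hb
    nlinarith [sq_nonneg ((2 * β) * ‖w r - w (r+1)‖ - τ)]
  have hS2le : ∑ r ∈ Finset.range R,
      ‖(2 * β) • (w r - proxF (w r - (1 / (2 * β)) • gradient F0 (w r)))‖ ^ 2
        ≤ 2 * S1 + 2 * R * τ ^ 2 := by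
    calc ∑ r ∈ Finset.range R,
        ‖(2 * β) • (w r - proxF (w r - (1 / (2 * β)) • gradient F0 (w r)))‖ ^ 2
        ≤ ∑ r ∈ Finset.range R,
          (2 * ‖(2 * β) • (w r - w (r + 1))‖ ^ 2 + 2 * τ ^ 2) := by
          exact Finset.sum_le_sum fun r hr => hterm r (Finset.mem_range.mp hr)
      _ = 2 * S1 + 2 * R * τ ^ 2 := by
          rw [Finset.sum_add_distrib, ← Finset.mul_sum, Finset.sum_const,
            Finset.card_range, hS1]
          push_cast
          ring
  have hS2le2 : ∑ r ∈ Finset.range R,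
      ‖(2 * β) • (w r - proxF (w r - (1 / (2 * β)) • gradient F0 (w r)))‖ ^ 2
        ≤ 8 * β * ΔF + 6 * R * τ ^ 2 := by linarith
  have h1 := mul_le_mul_of_nonneg_left hS2le2 (by positivity : (0:ℝ) ≤ 1 / R)
  have h2 : (1 / (R : ℝ)) * (8 * β * ΔF + 6 * R * τ ^ 2)
      = 8 * β * ΔF / R + 6 * τ ^ 2 := by
    field_simp
  have h3 : 8 * β * ΔF / R ≤ 16 * β * ΔF / R := by
    gcongr
    nlinarith
  linarith
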